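/- Let $\eta_{p,q}$ and $\eta_{p,q}^* $ be defined via $\eta_{p,q} = \widehat{\wp}_{p,q}(1) + \widehat{\wp}_{p,q}^*(2)$ where $\widehat{\wp}_{p,q}(k)$, $k\in\{1,2\}$, are symmetrized creation operators with covariances $b_{p,q}(1)=b_{p,q}(2)=b_{p,q}$. Then for $p\neq q$: $\Psi_q(\eta_{p,q}\eta_{p,q}^*) = b_{p,q}$, $\Psi_q((\eta_{p,q}\eta_{p,q}^*)^2) = b_{p,q}^2 + b_{p,q}b_{q,p}$, and $\Psi_q((\eta_{p,q}\eta_{p,q}^*)^3) = b_{p,q}^3 + 3 b_{p,q}^2 b_{q,p} + b_{p,q} b_{q,p}^2$. -/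

import Mathlib

open ContinuousLinearMap

/-- Basis-index test for nontrivial action of `℘_{p,q}(k)` on the matricially free Fock
space of tracial type; basis vectors are indexed by `Fin r × List (Fin r × Fin 2)`,
where the second entry of a letter is the label `k ∈ {1,2}` of the array. -/
def actsOn {r : ℕ} (q : Fin r) (x : Fin r × List (Fin r × Fin 2)) : Bool :=
  match x.2 with
  | [] => x.1 == q
  | (a, _) :: _ => a == q

/-- Let `η_{p,q} = ℘̂_{p,q}(1) + ℘̂_{p,q}(2)*`, where
`℘̂_{p,q}(k) = ℘_{p,q}(k) + ℘_{q,p}(k)` are symmetrized creation operators with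
covariances `b_{p,q}(1) = b_{p,q}(2) = b_{p,q}`.  Then for `p ≠ q`:
`Ψ_q(η_{p,q} η_{p,q}*) = b_{p,q}`,
`Ψ_q((η_{p,q} η_{p,q}*)²) = b_{p,q}² + b_{p,q} b_{q,p}` and
`Ψ_q((η_{p,q} η_{p,q}*)³) = b_{p,q}³ + 3 b_{p,q}² b_{q,p} + b_{p,q} b_{q,p}²`. -/
theorem stmt19 {H : Type} [NormedAddCommGroup H] [InnerProductSpace ℂ H] [CompleteSpace H]
    (r : ℕ) (b : Fin r → Fin r → ℝ) (hb : ∀ i j, 0 ≤ b i j)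
    (e : Fin r × List (Fin r × Fin 2) → H) (he : Orthonormal ℂ e)
    (hdense : (Submodule.span ℂ (Set.range e)).topologicalClosure = ⊤)
    (c : Fin r → Fin r → Fin 2 → H →L[ℂ] H)
    (hc : ∀ i j k x, c i j k (e x) =
      if actsOn j x then (Real.sqrt (b i j) : ℂ) • e (x.1, (i, k) :: x.2) else 0)
    (whp : Fin r → Fin r → Fin 2 → H →L[ℂ] H)
    (hwhp : ∀ i j k, whp i j k = c i j k + c j i k)
    (p q : Fin r) (hpq : p ≠ q)
    (eta : H →L[ℂ] H) (heta : eta = whp p q 0 + adjoint (whp p q 1)) :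
    (@inner ℂ H _ (e (q, ([] : List (Fin r × Fin 2))))
        ((eta * adjoint eta) (e (q, [])))) = ((b p q : ℝ) : ℂ) ∧
    (@inner ℂ H _ (e (q, ([] : List (Fin r × Fin 2))))
        (((eta * adjoint eta) ^ 2) (e (q, [])))) =
      (((b p q) ^ 2 + b p q * b q p : ℝ) : ℂ) ∧
    (@inner ℂ H _ (e (q, ([] : List (Fin r × Fin 2))))
        (((eta * adjoint eta) ^ 3) (e (q, [])))) =
      (((b p q) ^ 3 + 3 * (b p q) ^ 2 * (b q p) + (b p q) * (b q p) ^ 2 : ℝ) : ℂ) := by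
  classical
  have hinner : ∀ x y, (inner ℂ (e x) (e y) : ℂ) = if x = y then 1 else 0 :=
    orthonormal_iff_ite.mp he
  have horth : (Submodule.span ℂ (Set.range e))ᗮ = ⊥ :=
    Submodule.topologicalClosure_eq_top_iff.mp hdense
  have hext : ∀ u v : H, (∀ y, (inner ℂ (e y) u : ℂ) = inner ℂ (e y) v) → u = v := by
    intro u v h
    have hm : u - v ∈ (Submodule.span ℂ (Set.range e))ᗮ := by
      rw [Submodule.mem_orthogonal]
      intro w hw
      induction hw using Submodule.span_induction with
      | mem w hw => obtain ⟨z, rfl⟩ := hw; simp [inner_sub_right, h z]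
      | zero => simp
      | add _ _ _ _ h1 h2 => simp [inner_add_left, h1, h2]
      | smul a _ _ h1 => simp [inner_smul_left, h1]
    rw [horth, Submodule.mem_bot, sub_eq_zero] at hm
    exact hm
  have hadj_nil : ∀ i j k x1, adjoint (c i j k) (e (x1, ([] : List (Fin r × Fin 2)))) = 0 := by
    intro i j k x1
    apply hext
    intro z
    rw [ContinuousLinearMap.adjoint_inner_right, hc]
    split
    · rw [inner_smul_left, hinner]
      simp
    · simp
  have hadj : ∀ i j k x1 a m t, adjoint (c i j k) (e (x1, (a, m) :: t)) =
      if a = i ∧ m = k ∧ actsOn j (x1, t) then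
        ((Real.sqrt (b i j) : ℂ)) • e (x1, t) else 0 := by
    intro i j k x1 a m t
    apply hext
    rintro ⟨z1, zl⟩
    rw [ContinuousLinearMap.adjoint_inner_right, hc]
    by_cases h1 : actsOn j (z1, zl)
    · rw [if_pos h1, inner_smul_left, hinner]
      by_cases h2 : a = i ∧ m = k ∧ actsOn j (x1, t)
      · rw [if_pos h2, inner_smul_right, hinner]
        obtain ⟨rfl, rfl, h3⟩ := h2
        by_cases h4 : z1 = x1 ∧ zl = t
        · obtain ⟨rfl, rfl⟩ := h4
          rw [if_pos rfl, if_pos rfl]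
          simp [Complex.conj_ofReal]
        · rw [if_neg, if_neg]
          · simp
          · simp only [Prod.mk.injEq]; exact fun h => h4 h
          · simp only [Prod.mk.injEq, List.cons.injEq]
            rintro ⟨u, -, v⟩; exact h4 ⟨u, v⟩
      · rw [if_neg h2, inner_zero_right, if_neg]
        · simp
        · simp only [Prod.mk.injEq, List.cons.injEq]
          rintro ⟨rfl, ⟨rfl, rfl⟩, rfl⟩
          exact h2 ⟨rfl, rfl, h1⟩
    · rw [if_neg h1, inner_zero_left]
      by_cases h2 : a = i ∧ m = k ∧ actsOn j (x1, t)
      · rw [if_pos h2, inner_smul_right, hinner, if_neg]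
        · simp
        · simp only [Prod.mk.injEq]
          rintro ⟨rfl, rfl⟩
          exact h1 h2.2.2
      · rw [if_neg h2, inner_zero_right]
  have hη : ∀ v, eta v = c p q 0 v + c q p 0 v
      + adjoint (c p q 1) v + adjoint (c q p 1) v := by
    intro v
    rw [heta, hwhp, hwhp, map_add]
    simp only [ContinuousLinearMap.add_apply]
    abel
  have hη' : ∀ v, adjoint eta v = adjoint (c p q 0) v + adjoint (c q p 0) v
      + c p q 1 v + c q p 1 v := by
    intro v
    rw [heta, map_add, hwhp, hwhp, map_add, adjoint_adjoint]
    simp only [ContinuousLinearMap.add_apply]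
    abel
  have hqp : q ≠ p := hpq.symm
  set x := Real.sqrt (b p q) with hxdef
  set y := Real.sqrt (b q p) with hydef
  have hx : x * x = b p q := by rw [hxdef]; exact Real.mul_self_sqrt (hb p q)
  have hy : y * y = b q p := by rw [hydef]; exact Real.mul_self_sqrt (hb q p)
  have h0 : adjoint eta (e (q, ([] : List (Fin r × Fin 2)))) =
      (x : ℂ) • e (q, [(p, 1)]) := by
    rw [hη', hadj_nil, hadj_nil, hc, hc]
    simp [actsOn, hqp, ← hxdef]
  have h1 : eta (e (q, [(p, 1)])) =
      (y : ℂ) • e (q, [(q, 0), (p, 1)])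
      + (x : ℂ) • e (q, ([] : List (Fin r × Fin 2))) := by
    rw [hη, hc, hc, hadj, hadj]
    simp [actsOn, hpq, hqp, ← hxdef, ← hydef]
  have h2 : adjoint eta (e (q, [(q, 0), (p, 1)])) =
      (y : ℂ) • e (q, [(p, 1)])
      + (x : ℂ) • e (q, [(p, 1), (q, 0), (p, 1)]) := by
    rw [hη', hadj, hadj, hc, hc]
    simp [actsOn, hpq, hqp, ← hxdef, ← hydef]
  have h3 : eta (e (q, [(p, 1), (q, 0), (p, 1)])) =
      (y : ℂ) • e (q, [(q, 0), (p, 1), (q, 0), (p, 1)])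
      + (x : ℂ) • e (q, [(q, 0), (p, 1)]) := by
    rw [hη, hc, hc, hadj, hadj]
    simp [actsOn, hpq, hqp, ← hxdef, ← hydef]
  have h4 : adjoint eta (e (q, [(q, 0), (p, 1), (q, 0), (p, 1)])) =
      (y : ℂ) • e (q, [(p, 1), (q, 0), (p, 1)])
      + (x : ℂ) • e (q, [(p, 1), (q, 0), (p, 1), (q, 0), (p, 1)]) := by
    rw [hη', hadj, hadj, hc, hc]
    simp [actsOn, hpq, hqp, ← hxdef, ← hydef]
  have h5 : eta (e (q, [(p, 1), (q, 0), (p, 1), (q, 0), (p, 1)])) =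
      (y : ℂ) • e (q, [(q, 0), (p, 1), (q, 0), (p, 1), (q, 0), (p, 1)])
      + (x : ℂ) • e (q, [(q, 0), (p, 1), (q, 0), (p, 1)]) := by
    rw [hη, hc, hc, hadj, hadj]
    simp [actsOn, hpq, hqp, ← hxdef, ← hydef]
  have hsq : (eta * adjoint eta) ^ 2 = (eta * adjoint eta) * (eta * adjoint eta) := sq _
  have hcube : (eta * adjoint eta) ^ 3
      = (eta * adjoint eta) * ((eta * adjoint eta) * (eta * adjoint eta)) := by
    rw [pow_succ, hsq, mul_assoc]
  refine ⟨?_, ?_, ?_⟩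
  · rw [ContinuousLinearMap.mul_apply]
    simp only [h0, h1, h2, h3, h4, h5, map_add, map_smul, smul_add, smul_smul,
      inner_add_right, inner_smul_right, hinner]
    simp only [Prod.mk.injEq, List.cons.injEq, reduceIte, and_true, and_false,
      List.cons_ne_nil, if_true, if_false, List.ne_cons_self]
    simp
    rw [← hx]
    push_cast
    ring
  · rw [hsq]
    simp only [ContinuousLinearMap.mul_apply]
    simp only [h0, h1, h2, h3, h4, h5, map_add, map_smul, smul_add, smul_smul,
      inner_add_right, inner_smul_right, hinner]
    simp
    rw [← hx, ← hy]
    push_cast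
    ring
  · rw [hcube]
    simp only [ContinuousLinearMap.mul_apply]
    simp only [h0, h1, h2, h3, h4, h5, map_add, map_smul, smul_add, smul_smul,
      inner_add_right, inner_smul_right, hinner]
    simp
    rw [← hx, ← hy]
    push_cast
    ring
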